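/- Let (Ω(S),T) be a substitution dynamical system satisfying condition (BG). Then there exist a constant L>0 and N∈ℕ such that for every n≥N and every v∈W(S) containing at least one letter of C, one has 1/L ≤ |S̃^n(ṽ)| / |S^n(v)| ≤ 1. -/

import Mathlib

open List Filter Topology MeasureTheory

namespace SubstLR

variable {A : Type*}

/-- Apply the substitution `S` to a finite word. -/
def subst (S : A → List A) (w : List A) : List A := w.flatMap S

/-- `iter S n w` is `S^n(w)`. -/
def iter (S : A → List A) (n : ℕ) (w : List A) : List A := (subst S)^[n] w

/-- The set `W(S)` of finite words associated to `S`. -/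
def WS (S : A → List A) : Set (List A) := {w | ∃ (a : A) (n : ℕ), w <:+: iter S n [a]}

/-- `w` is a finite factor of the two-sided infinite word `ω`. -/
def IsFactor (w : List A) (ω : ℤ → A) : Prop :=
  ∃ k : ℤ, w = (List.range w.length).map fun i => ω (k + i)

/-- The subshift `Ω(S)` associated to `S`. -/
def OmegaS (S : A → List A) : Set (ℤ → A) := {ω | ∀ w, IsFactor w ω → w ∈ WS S}

/-- The set `W(Ω(S))` of finite factors of elements of `Ω(S)`. -/
def WOmega (S : A → List A) : Set (List A) := {w | ∃ ω ∈ OmegaS S, IsFactor w ω}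

/-- Condition (ℓ): `|S^n(e)| → ∞`. -/
def CondL (S : A → List A) (e : A) : Prop :=
  Tendsto (fun n => (iter S n [e]).length) atTop atTop

/-- Condition (o): every letter occurs in some `S^n(e)`. -/
def CondO (S : A → List A) (e : A) : Prop := ∀ a : A, ∃ n : ℕ, a ∈ iter S n [e]

/-- Condition (c): `W(S) = W(Ω(S))`. -/
def CondC (S : A → List A) : Prop := WS S = WOmega S

/-- `(Ω(S),T)` is a substitution dynamical system. -/
def IsSubstSystem (S : A → List A) : Prop := (∃ e, CondL S e ∧ CondO S e) ∧ CondC S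

/-- `v` occurs with bounded gaps in the set of words `W`. -/
def BddGaps (v : List A) (W : Set (List A)) : Prop :=
  ∃ L : ℕ, 0 < L ∧ ∀ w ∈ W, L ≤ w.length → v <:+: w

/-- Condition (BG) for the letter `e`. -/
def BG (S : A → List A) (e : A) : Prop := CondL S e ∧ CondO S e ∧ BddGaps [e] (WS S)

/-- The shift by `k`; `shift 1` is the map `T`. -/
def shift (k : ℤ) (ω : ℤ → A) : ℤ → A := fun n => ω (n + k)

/-- `(Ω(S),T)` is minimal: every orbit is dense in `Ω(S)`. -/
def Minimal [TopologicalSpace A] (S : A → List A) : Prop :=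
  ∀ ω ∈ OmegaS S, OmegaS S ⊆ closure {ω' | ∃ k : ℤ, ω' = shift k ω}

/-- `(Ω(S),T)` is linearly repetitive. -/
def LinRep (S : A → List A) : Prop :=
  ∃ C : ℝ, 0 < C ∧ ∀ v ∈ WS S, ∀ w ∈ WS S, C * v.length ≤ (w.length : ℝ) → v <:+: w

/-- `(Ω(S),T)` is aperiodic. -/
def Aperiodic (S : A → List A) : Prop :=
  ∀ ω ∈ OmegaS S, ∀ k : ℤ, k ≠ 0 → shift k ω ≠ ω

/-- The set `B` of letters `a` with `limsup |S^n(a)| < ∞`. -/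
def Bset (S : A → List A) : Set A := {a | ∃ M : ℕ, ∀ n, (iter S n [a]).length ≤ M}

/-- The set `C = A ∖ B`. -/
def Cset (S : A → List A) : Set A := (Bset S)ᶜ

open Classical in
/-- `tilde S w` is the word obtained from `w` by deleting all letters of `B`. -/
noncomputable def tilde (S : A → List A) (w : List A) : List A :=
  w.filter fun x => decide (x ∈ Cset S)

/-- The induced substitution `S̃`. -/
noncomputable def tildeS (S : A → List A) : A → List A := fun x => tilde S (S x)


/-! ### Auxiliary lemmas -/

theorem subst_append (S : A → List A) (u v : List A) :
    subst S (u ++ v) = subst S u ++ subst S v := List.flatMap_append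

theorem iter_succ (S : A → List A) (n : ℕ) (w : List A) :
    iter S (n + 1) w = iter S n (subst S w) := Function.iterate_succ_apply _ _ _

theorem iter_succ' (S : A → List A) (n : ℕ) (w : List A) :
    iter S (n + 1) w = subst S (iter S n w) := Function.iterate_succ_apply' _ _ _

theorem iter_append (S : A → List A) (n : ℕ) (u v : List A) :
    iter S n (u ++ v) = iter S n u ++ iter S n v := by
  induction n generalizing u v with
  | zero => rfl
  | succ n ih => rw [iter_succ, iter_succ, iter_succ, subst_append, ih]

theorem subst_singleton (S : A → List A) (a : A) : subst S [a] = S a := by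
  simp [subst]

theorem iter_singleton_subst (S : A → List A) (n : ℕ) (a : A) :
    iter S (n + 1) [a] = iter S n (S a) := by
  rw [iter_succ, subst_singleton]

/-- If `a ∈ B` then every letter of `S a` is in `B`. -/
theorem mem_Bset_of_mem_subst {S : A → List A} {a b : A}
    (ha : a ∈ Bset S) (hb : b ∈ S a) : b ∈ Bset S := by
  obtain ⟨M, hM⟩ := ha
  refine ⟨M, fun n => ?_⟩
  obtain ⟨s, t, hst⟩ := List.append_of_mem hb
  calc (iter S n [b]).length
      ≤ (iter S n (S a)).length := by
        rw [hst, show s ++ b :: t = s ++ [b] ++ t by simp, iter_append, iter_append]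
        simp
        omega
    _ = (iter S (n + 1) [a]).length := by rw [iter_singleton_subst]
    _ ≤ M := hM (n + 1)

theorem tilde_cons_of_mem {S : A → List A} {a : A} (w : List A) (ha : a ∈ Cset S) :
    tilde S (a :: w) = a :: tilde S w := by
  simp [tilde, List.filter_cons, ha]

theorem tilde_cons_of_not_mem {S : A → List A} {a : A} (w : List A) (ha : a ∉ Cset S) :
    tilde S (a :: w) = tilde S w := by
  simp [tilde, List.filter_cons, ha]

theorem tilde_subst (S : A → List A) (w : List A) :
    tilde S (subst S w) = subst (tildeS S) (tilde S w) := by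
  induction w with
  | nil => rfl
  | cons a w ih =>
    have hc : subst S (a :: w) = S a ++ subst S w := by simp [subst]
    rw [hc, tilde, List.filter_append, ← tilde, ← tilde, ih]
    by_cases ha : a ∈ Cset S
    · rw [tilde_cons_of_mem w ha]
      show tilde S (S a) ++ _ = subst (tildeS S) (a :: tilde S w)
      simp [subst, tildeS]
    · have haB : a ∈ Bset S := by
        simpa [Cset] using ha
      have h1 : tilde S (S a) = [] := by
        rw [tilde, List.filter_eq_nil_iff]
        intro b hb
        simp [Cset, mem_Bset_of_mem_subst haB hb]
      rw [tilde_cons_of_not_mem w ha, h1, List.nil_append]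

theorem tilde_iter (S : A → List A) (n : ℕ) (w : List A) :
    tilde S (iter S n w) = iter (tildeS S) n (tilde S w) := by
  induction n generalizing w with
  | zero => rfl
  | succ n ih => rw [iter_succ, iter_succ, ih, tilde_subst]

theorem infix_mem_WS {S : A → List A} {u w : List A} (h : u <:+: w) (hw : w ∈ WS S) :
    u ∈ WS S := by
  obtain ⟨a, n, hn⟩ := hw
  exact ⟨a, n, h.trans hn⟩

theorem subst_mem_WS {S : A → List A} {v : List A} (hv : v ∈ WS S) : subst S v ∈ WS S := by
  obtain ⟨a, n, s, t, h⟩ := hv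
  exact ⟨a, n + 1, subst S s, subst S t, by
    rw [← subst_append, ← subst_append, h, iter_succ']⟩

theorem iter_mem_WS {S : A → List A} {v : List A} (hv : v ∈ WS S) (n : ℕ) :
    iter S n v ∈ WS S := by
  induction n with
  | zero => exact hv
  | succ n ih => rw [iter_succ']; exact subst_mem_WS ih

/-- Under the bounded-gaps hypothesis, the length of any word in `W(S)` is controlled
by the number of occurrences of `e`. -/
theorem length_le_count {S : A → List A} {e : A} [BEq A] [LawfulBEq A] {L : ℕ} (hL : 0 < L)
    (hgap : ∀ w ∈ WS S, L ≤ w.length → e ∈ w) :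
    ∀ n : ℕ, ∀ w ∈ WS S, w.length ≤ n → w.length ≤ L * (w.count e + 1) := by
  intro n
  induction n with
  | zero =>
    intro w _ hw
    have : w.length = 0 := Nat.le_zero.mp hw
    omega
  | succ n ih =>
    intro w hwWS hwlen
    by_cases hsmall : w.length ≤ L
    · calc w.length ≤ L := hsmall
        _ ≤ L * (w.count e + 1) := Nat.le_mul_of_pos_right L (Nat.succ_pos _)
    · push_neg at hsmall
      have hsplit : w = w.take L ++ w.drop L := (List.take_append_drop L w).symm
      have htakeWS : w.take L ∈ WS S := infix_mem_WS (w.take_prefix L).isInfix hwWS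
      have hdropWS : w.drop L ∈ WS S := infix_mem_WS (w.drop_suffix L).isInfix hwWS
      have htakelen : (w.take L).length = L := by
        rw [List.length_take]; omega
      have hetake : e ∈ w.take L := hgap _ htakeWS (le_of_eq htakelen.symm)
      have hcount1 : 1 ≤ (w.take L).count e := List.count_pos_iff.mpr hetake
      have hdroplen : (w.drop L).length = w.length - L := List.length_drop
      have hdrople : (w.drop L).length ≤ n := by omega
      have hd := ih (w.drop L) hdropWS hdrople
      have hcadd : w.count e = (w.take L).count e + (w.drop L).count e := by
        conv_lhs => rw [hsplit]
        exact List.count_append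
      have hlen : w.length = L + (w.drop L).length := by omega
      calc w.length = L + (w.drop L).length := hlen
        _ ≤ L + L * ((w.drop L).count e + 1) := by omega
        _ = L * ((w.drop L).count e + 2) := by ring
        _ ≤ L * ((w.take L).count e + (w.drop L).count e + 1) :=
            Nat.mul_le_mul_left L (by omega)
        _ = L * (w.count e + 1) := by rw [hcadd]

/-- If two iterates of `S` on `[c]` coincide, then `c ∈ B`. -/
theorem mem_Bset_of_iter_eq {S : A → List A} {c : A} {n₁ p : ℕ} (hp : 0 < p)
    (heq : iter S n₁ [c] = iter S (n₁ + p) [c]) : c ∈ Bset S := by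
  have hper : ∀ k, n₁ ≤ k → iter S (k + p) [c] = iter S k [c] := by
    intro k hk
    have h1 : iter S (k + p) [c] = iter S (k - n₁) (iter S (n₁ + p) [c]) := by
      rw [show k + p = (k - n₁) + (n₁ + p) by omega, iter]
      exact Function.iterate_add_apply _ _ _ _
    have h2 : iter S (k - n₁) (iter S n₁ [c]) = iter S k [c] := by
      rw [iter, iter, ← Function.iterate_add_apply, show k - n₁ + n₁ = k by omega]
      rfl
    rw [h1, ← heq, h2]
  have hmem : ∀ k, ∃ m, m ≤ n₁ + p ∧ iter S k [c] = iter S m [c] := by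
    intro k
    induction k using Nat.strong_induction_on with
    | _ k ih =>
      by_cases hk : k ≤ n₁ + p
      · exact ⟨k, hk, rfl⟩
      · push_neg at hk
        obtain ⟨m, hm, hmeq⟩ := ih (k - p) (by omega)
        refine ⟨m, hm, ?_⟩
        rw [← hmeq, ← hper (k - p) (by omega), show k - p + p = k by omega]
  classical
  refine ⟨(Finset.range (n₁ + p + 1)).sup (fun m => (iter S m [c]).length), fun k => ?_⟩
  obtain ⟨m, hm, hmeq⟩ := hmem k
  rw [hmeq]
  exact Finset.le_sup (f := fun m => (iter S m [c]).length) (Finset.mem_range.mpr (by omega))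

/-- Letters of `C` have iterates of length tending to infinity. -/
theorem eventually_length_ge [Finite A] {S : A → List A} {c : A} (hc : c ∈ Cset S) (M : ℕ) :
    ∃ N : ℕ, ∀ n, N ≤ n → M ≤ (iter S n [c]).length := by
  have hinj : Function.Injective (fun n => iter S n [c]) := by
    intro n₁ n₂ h
    by_contra hne
    rcases Nat.lt_or_ge n₁ n₂ with hlt | hge
    · exact hc (mem_Bset_of_iter_eq (p := n₂ - n₁) (by omega)
        (by rw [show n₁ + (n₂ - n₁) = n₂ by omega]; exact h))
    · have hlt : n₂ < n₁ := by omega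
      exact hc (mem_Bset_of_iter_eq (p := n₁ - n₂) (by omega)
        (by rw [show n₂ + (n₁ - n₂) = n₁ by omega]; exact h.symm))
  have hfin : {n : ℕ | (iter S n [c]).length < M}.Finite := by
    have hsub : {n : ℕ | (iter S n [c]).length < M} ⊆
        (fun n => iter S n [c]) ⁻¹' {l : List A | l.length ≤ M} := by
      intro n hn
      simp only [Set.mem_setOf_eq] at hn
      simp only [Set.mem_preimage, Set.mem_setOf_eq]
      omega
    exact Set.Finite.subset
      (Set.Finite.preimage hinj.injOn (List.finite_length_le A M)) hsub
  obtain ⟨N₀, hN₀⟩ := (hfin.bddAbove : BddAbove {n : ℕ | (iter S n [c]).length < M})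
  refine ⟨N₀ + 1, fun n hn => ?_⟩
  by_contra hlt
  push_neg at hlt
  have := hN₀ (Set.mem_setOf.mpr hlt)
  omega

/-- under (BG), there are `L > 0` and `N` such that for all `n ≥ N` and all
`v ∈ W(S)` containing a letter of `C`, one has `1/L ≤ |S̃^n(ṽ)|/|S^n(v)| ≤ 1`. -/
theorem statement6 {A : Type*} [Fintype A]
    (S : A → List A) (hS : IsSubstSystem S) (hBG : ∃ e : A, BG S e) :
    ∃ L : ℝ, 0 < L ∧ ∃ N : ℕ, ∀ n : ℕ, N ≤ n → ∀ v ∈ WS S, (∃ c ∈ v, c ∈ Cset S) →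
      1 / L ≤ ((iter (tildeS S) n (tilde S v)).length : ℝ) / ((iter S n v).length : ℝ) ∧
      ((iter (tildeS S) n (tilde S v)).length : ℝ) / ((iter S n v).length : ℝ) ≤ 1 := by
  classical
  obtain ⟨e, hel, -, L0, hL0, hgap⟩ := hBG
  have heC : e ∈ Cset S := by
    intro heB
    obtain ⟨M, hM⟩ := heB
    obtain ⟨n, hn⟩ := (hel.eventually_ge_atTop (M + 1)).exists
    have := hM n
    omega
  have hgap' : ∀ w ∈ WS S, L0 ≤ w.length → e ∈ w := fun w hw hl =>
    (hgap w hw hl).subset (List.mem_singleton_self e)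
  have hgrow : ∀ a : A, ∃ N, ∀ n, N ≤ n → a ∈ Cset S → 2 * L0 ≤ (iter S n [a]).length := by
    intro a
    by_cases ha : a ∈ Cset S
    · obtain ⟨N, hN⟩ := eventually_length_ge ha (2 * L0)
      exact ⟨N, fun n hn _ => hN n hn⟩
    · exact ⟨0, fun n _ h => absurd h ha⟩
  choose Nf hNf using hgrow
  refine ⟨2 * L0, by positivity, Finset.univ.sup Nf, fun n hn v hv hcex => ?_⟩
  obtain ⟨c, hcv, hcC⟩ := hcex
  set w := iter S n v with hw
  have hwWS : w ∈ WS S := iter_mem_WS hv n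
  have hk2L : 2 * L0 ≤ w.length := by
    obtain ⟨s, t, hst⟩ := List.append_of_mem hcv
    have h1 : (iter S n [c]).length ≤ w.length := by
      rw [hw, hst, show s ++ c :: t = s ++ [c] ++ t by simp, iter_append, iter_append]
      simp
      omega
    have h2 := hNf c n (le_trans (Finset.le_sup (Finset.mem_univ c)) hn) hcC
    omega
  have hkpos : 0 < w.length := by omega
  have htlen : (iter (tildeS S) n (tilde S v)).length = (tilde S w).length := by
    rw [hw, ← tilde_iter]
  have ht_le : (tilde S w).length ≤ w.length := List.length_filter_le _ _
  have hcnt : w.length ≤ L0 * (w.count e + 1) :=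
    length_le_count hL0 hgap' w.length w hwWS le_rfl
  have hcnt_t : w.count e ≤ (tilde S w).length := by
    have hce : (tilde S w).count e = w.count e :=
      List.count_filter (by simp [heC])
    rw [← hce]
    exact List.count_le_length
  have hce1 : 1 ≤ w.count e := by
    have h2 : L0 * 2 ≤ L0 * (w.count e + 1) := by
      calc L0 * 2 = 2 * L0 := Nat.mul_comm _ _
        _ ≤ w.length := hk2L
        _ ≤ L0 * (w.count e + 1) := hcnt
    have := Nat.le_of_mul_le_mul_left h2 hL0
    omega
  have hkey : w.length ≤ 2 * L0 * (tilde S w).length := by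
    calc w.length ≤ L0 * (w.count e + 1) := hcnt
      _ ≤ L0 * (2 * w.count e) := Nat.mul_le_mul_left _ (by omega)
      _ = 2 * L0 * w.count e := by ring
      _ ≤ 2 * L0 * (tilde S w).length := Nat.mul_le_mul_left _ hcnt_t
  have hkposR : (0:ℝ) < (w.length : ℝ) := by exact_mod_cast hkpos
  rw [htlen]
  constructor
  · rw [div_le_div_iff₀ (by positivity) hkposR]
    have : (w.length : ℝ) ≤ 2 * L0 * (tilde S w).length := by exact_mod_cast hkey
    nlinarith
  · rw [div_le_one hkposR]
    exact_mod_cast ht_le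

end SubstLR
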